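/- arXiv:1409.1860 — 2 statements merged into one kernel-verified Lean document; each statement's English description precedes it below -/
import Mathlib

section
/- Let p ∈ (1,∞), γ < 1 - 1/p, and let f : ℝ → ℝ satisfy x ↦ f(x)⟨x⟩^γ ∈ L^p(ℝ). Define u(x) = ∫₀ˣ f(y) dy. Then there is a constant C (depending only on p and γ) such that ‖u·⟨x⟩^{γ-1}‖_{L^p} ≤ C‖f·⟨x⟩^γ‖_{L^p}. -/
open MeasureTheory Set
open scoped ENNReal

namespace Stmt8Aux

noncomputable def w (s x : ℝ) : ℝ := (1 + x ^ 2) ^ (s / 2)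
noncomputable def W (s x : ℝ) : ℝ≥0∞ := ENNReal.ofReal (w s x)

lemma base_pos (x : ℝ) : (0:ℝ) < 1 + x ^ 2 := by positivity

lemma w_pos (s x : ℝ) : 0 < w s x := Real.rpow_pos_of_pos (base_pos x) _

lemma w_nonneg (s x : ℝ) : 0 ≤ w s x := (w_pos s x).le

lemma w_mul (s t x : ℝ) : w s x * w t x = w (s + t) x := by
  rw [w, w, w, show (s + t) / 2 = s / 2 + t / 2 by ring, Real.rpow_add (base_pos x)]

lemma w_rpow (s x r : ℝ) : w s x ^ r = w (s * r) x := by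
  rw [w, w, show s * r / 2 = s / 2 * r by ring, Real.rpow_mul (base_pos x).le]

lemma w_zero (x : ℝ) : w 0 x = 1 := by simp [w]

lemma w_neg_arg (s x : ℝ) : w s (-x) = w s x := by simp [w]

lemma W_mul (s t x : ℝ) : W s x * W t x = W (s + t) x := by
  rw [W, W, W, ← ENNReal.ofReal_mul (w_nonneg s x), w_mul]

lemma W_rpow (s x : ℝ) {r : ℝ} (hr : 0 ≤ r) : W s x ^ r = W (s * r) x := by
  rw [W, W, ENNReal.ofReal_rpow_of_nonneg (w_nonneg s x) hr, w_rpow]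

lemma W_zero (x : ℝ) : W 0 x = 1 := by simp [W, w_zero]

lemma W_neg_arg (s x : ℝ) : W s (-x) = W s x := by rw [W, W, w_neg_arg]

lemma W_ne_top (s x : ℝ) : W s x ≠ ∞ := ENNReal.ofReal_ne_top

lemma measurable_w (s : ℝ) : Measurable (w s) := by
  have : Continuous (w s) := by
    apply Continuous.rpow_const
    · exact continuous_const.add (continuous_pow 2)
    · intro x; exact Or.inl (base_pos x).ne'
  exact this.measurable

lemma measurable_W (s : ℝ) : Measurable (W s) :=
  (measurable_w s).ennreal_ofReal

lemma sq_w_one (x : ℝ) : w 1 x * w 1 x = 1 + x ^ 2 := by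
  rw [w_mul]; norm_num [w]

lemma self_le_w_one {x : ℝ} (hx : 0 ≤ x) : x ≤ w 1 x := by
  nlinarith [sq_w_one x, w_pos 1 x]

lemma w_le_rpow_self {d : ℝ} (hd : d ≤ 0) {y : ℝ} (hy : 0 < y) :
    w d y ≤ y ^ d := by
  have h1 : w d y ≤ (y ^ 2 : ℝ) ^ (d / 2) := by
    rw [w]
    exact Real.rpow_le_rpow_of_nonpos (by positivity) (by nlinarith) (by linarith)
  calc w d y ≤ (y ^ 2 : ℝ) ^ (d / 2) := h1
    _ = y ^ d := by
        rw [← Real.rpow_natCast y 2, ← Real.rpow_mul hy.le]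
        congr 1; ring

lemma w_le_one {d : ℝ} (hd : d ≤ 0) (x : ℝ) : w d x ≤ 1 := by
  rw [w]
  apply Real.rpow_le_one_of_one_le_of_nonpos (by nlinarith [sq_nonneg x]) (by linarith)

lemma w_mono {c : ℝ} (hc : 0 ≤ c) {y x : ℝ} (h2 : y ^ 2 ≤ x ^ 2) : w c y ≤ w c x := by
  rw [w, w]
  exact Real.rpow_le_rpow (base_pos y).le (by linarith) (by linarith)

end Stmt8Aux
section FrontTail
open Stmt8Aux

namespace Stmt8Aux

lemma front {c : ℝ} (hc : -1 < c) : ∃ K : ℝ, 0 < K ∧ ∀ x : ℝ, 0 < x →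
    ∫⁻ y in Set.Ioc 0 x, W c y ≤ ENNReal.ofReal (K * w (c + 1) x) := by
  rcases le_or_gt 0 c with h0 | h0
  · refine ⟨1, one_pos, fun x hx => ?_⟩
    have step1 : ∫⁻ y in Set.Ioc 0 x, W c y ≤ ∫⁻ _ in Set.Ioc 0 x, W c x := by
      apply setLIntegral_mono' measurableSet_Ioc
      intro y hy
      exact ENNReal.ofReal_le_ofReal (w_mono h0 (by nlinarith [hy.1, hy.2]))
    have step2 : ∫⁻ _ in Set.Ioc 0 x, W c x = W c x * ENNReal.ofReal x := by
      rw [setLIntegral_const, Real.volume_Ioc, sub_zero]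
    calc ∫⁻ y in Set.Ioc 0 x, W c y ≤ W c x * ENNReal.ofReal x := step1.trans step2.le
      _ ≤ ENNReal.ofReal (1 * w (c + 1) x) := by
          rw [W, ← ENNReal.ofReal_mul (w_nonneg c x), one_mul, ← w_mul]
          exact ENNReal.ofReal_le_ofReal
            (mul_le_mul_of_nonneg_left (self_le_w_one hx.le) (w_nonneg c x))
  · refine ⟨1 / (c + 1), one_div_pos.2 (by linarith), fun x hx => ?_⟩
    have hint : IntegrableOn (fun y : ℝ => y ^ c) (Set.Ioc 0 x) := by
      rw [← intervalIntegrable_iff_integrableOn_Ioc_of_le hx.le]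
      exact intervalIntegral.intervalIntegrable_rpow' hc
    have step1 : ∫⁻ y in Set.Ioc 0 x, W c y ≤ ∫⁻ y in Set.Ioc 0 x, ENNReal.ofReal (y ^ c) := by
      apply setLIntegral_mono' measurableSet_Ioc
      intro y hy
      exact ENNReal.ofReal_le_ofReal (w_le_rpow_self h0.le hy.1)
    have step2 : ∫⁻ y in Set.Ioc 0 x, ENNReal.ofReal (y ^ c)
        = ENNReal.ofReal (∫ y in Set.Ioc 0 x, y ^ c) := by
      rw [← ofReal_integral_eq_lintegral_ofReal hint]
      exact Filter.eventually_of_mem (ae_restrict_mem measurableSet_Ioc)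
        (fun y hy => Real.rpow_nonneg hy.1.le c)
    have step3 : ∫ y in Set.Ioc 0 x, y ^ c = x ^ (c + 1) / (c + 1) := by
      rw [← intervalIntegral.integral_of_le hx.le, integral_rpow (Or.inl hc)]
      rw [Real.zero_rpow (by linarith : c + 1 ≠ 0)]
      ring
    calc ∫⁻ y in Set.Ioc 0 x, W c y ≤ ENNReal.ofReal (x ^ (c + 1) / (c + 1)) := by
          rw [← step3, ← step2]; exact step1
      _ ≤ ENNReal.ofReal (1 / (c + 1) * w (c + 1) x) := by
          apply ENNReal.ofReal_le_ofReal
          have hx1 : x ^ (c + 1) ≤ w (c + 1) x := by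
            calc x ^ (c + 1) ≤ w 1 x ^ (c + 1) :=
                  Real.rpow_le_rpow hx.le (self_le_w_one hx.le) (by linarith)
              _ = w (c + 1) x := by rw [w_rpow, one_mul]
          rw [div_eq_mul_inv, one_div, mul_comm ((c + 1)⁻¹)]
          exact mul_le_mul_of_nonneg_right hx1 (inv_nonneg.2 (by linarith))

lemma tail_rpow {d : ℝ} (hd : d < -1) {z : ℝ} (hz : 0 < z) :
    ∫⁻ x in Set.Ici z, W d x ≤ ENNReal.ofReal (z ^ (d + 1) / (-(d + 1))) := by
  have hIoi : (volume : Measure ℝ).restrict (Set.Ici z) = volume.restrict (Set.Ioi z) :=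
    (Measure.restrict_congr_set Ioi_ae_eq_Ici).symm
  rw [hIoi]
  have step1 : ∫⁻ x in Set.Ioi z, W d x ≤ ∫⁻ x in Set.Ioi z, ENNReal.ofReal (x ^ d) := by
    apply setLIntegral_mono' measurableSet_Ioi
    intro x hx
    exact ENNReal.ofReal_le_ofReal (w_le_rpow_self (by linarith) (hz.trans hx))
  have step2 : ∫⁻ x in Set.Ioi z, ENNReal.ofReal (x ^ d)
      = ENNReal.ofReal (∫ x in Set.Ioi z, x ^ d) := by
    rw [← ofReal_integral_eq_lintegral_ofReal (integrableOn_Ioi_rpow_of_lt hd hz)]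
    exact Filter.eventually_of_mem (ae_restrict_mem measurableSet_Ioi)
      (fun x hx => Real.rpow_nonneg (hz.trans hx).le d)
  have step3 : ∫ x in Set.Ioi z, x ^ d = -z ^ (d + 1) / (d + 1) :=
    integral_Ioi_rpow_of_lt hd hz
  rw [show z ^ (d + 1) / (-(d + 1)) = -z ^ (d + 1) / (d + 1) by rw [div_neg, neg_div], ← step3, ← step2]
  exact step1

lemma tail {d : ℝ} (hd : d < -1) : ∃ K : ℝ, 0 < K ∧ ∀ y : ℝ, 0 < y →
    ∫⁻ x in Set.Ici y, W d x ≤ ENNReal.ofReal (K * w (d + 1) y) := by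
  have hd1 : d + 1 < 0 := by linarith
  set K₁ : ℝ := (2:ℝ) ^ (-(d + 1) / 2) / (-(d + 1)) with hK₁
  have hK₁pos : 0 < K₁ :=
    div_pos (Real.rpow_pos_of_pos (by norm_num) _) (by linarith)
  set K₂ : ℝ := (1 + K₁ * (2:ℝ) ^ ((d + 1) / 2)) * (2:ℝ) ^ (-(d + 1) / 2) with hK₂
  have h2p : ∀ r : ℝ, 0 < (2:ℝ) ^ r := fun r => Real.rpow_pos_of_pos (by norm_num) r
  have hK₂pos : 0 < K₂ := by
    apply mul_pos _ (h2p _)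
    nlinarith [h2p ((d + 1) / 2)]
  -- the bound for y ≥ 1
  have big : ∀ y : ℝ, 1 ≤ y → ∫⁻ x in Set.Ici y, W d x ≤ ENNReal.ofReal (K₁ * w (d + 1) y) := by
    intro y hy
    have hy0 : (0:ℝ) < y := lt_of_lt_of_le one_pos hy
    refine (tail_rpow hd hy0).trans (ENNReal.ofReal_le_ofReal ?_)
    have hyw : (2:ℝ) ^ (-(1:ℝ) / 2) * w 1 y ≤ y := by
      have h1 : ((2:ℝ) ^ (-(1:ℝ) / 2) * w 1 y) ^ 2 = 1 / 2 * (1 + y ^ 2) := by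
        rw [mul_pow, ← Real.rpow_natCast ((2:ℝ) ^ (-(1:ℝ)/2)) 2, ← Real.rpow_mul (by norm_num)]
        rw [sq, sq_w_one]
        norm_num [Real.rpow_neg_one]
      nlinarith [w_pos 1 y, h2p (-(1:ℝ)/2), sq_nonneg y, sq_nonneg (y - 1)]
    have hy2 : y ^ (d + 1) ≤ (2:ℝ) ^ (-(d + 1) / 2) * w (d + 1) y := by
      calc y ^ (d + 1) ≤ ((2:ℝ) ^ (-(1:ℝ) / 2) * w 1 y) ^ (d + 1) := by
            apply Real.rpow_le_rpow_of_nonpos _ hyw hd1.le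
            have := h2p (-(1:ℝ)/2)
            nlinarith [w_pos 1 y]
        _ = (2:ℝ) ^ (-(d + 1) / 2) * w (d + 1) y := by
            rw [Real.mul_rpow (h2p _).le (w_nonneg 1 y), w_rpow, one_mul,
              ← Real.rpow_mul (by norm_num)]
            congr 1
            ring
    have hinv : (0:ℝ) ≤ (-(d + 1))⁻¹ := inv_nonneg.2 (by linarith)
    have := mul_le_mul_of_nonneg_left hy2 hinv
    rw [hK₁]
    rw [div_eq_mul_inv, div_eq_mul_inv]
    nlinarith [this]
  refine ⟨K₁ + K₂, by positivity, fun y hy => ?_⟩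
  rcases le_or_gt 1 y with hy1 | hy1
  · refine (big y hy1).trans (ENNReal.ofReal_le_ofReal ?_)
    have := w_pos (d + 1) y
    nlinarith
  · -- 0 < y < 1
    have hsplit : Set.Ici y = Set.Ico y 1 ∪ Set.Ici 1 := (Set.Ico_union_Ici_eq_Ici hy1.le).symm
    rw [hsplit, lintegral_union measurableSet_Ici (Set.disjoint_left.mpr (fun x hx hx' => absurd hx.2 (not_lt.mpr hx')))]
    have part1 : ∫⁻ x in Set.Ico y 1, W d x ≤ ENNReal.ofReal 1 := by
      calc ∫⁻ x in Set.Ico y 1, W d x ≤ ∫⁻ _ in Set.Ico y 1, ENNReal.ofReal 1 :=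
            setLIntegral_mono' measurableSet_Ico
              (fun x _ => ENNReal.ofReal_le_ofReal (w_le_one (by linarith) x))
        _ = ENNReal.ofReal 1 * ENNReal.ofReal (1 - y) := by
            rw [setLIntegral_const, Real.volume_Ico]
        _ ≤ ENNReal.ofReal 1 * 1 := by
            apply mul_le_mul_right (ENNReal.ofReal_le_one.2 (by linarith))
        _ = ENNReal.ofReal 1 := mul_one _
    have part2 : ∫⁻ x in Set.Ici 1, W d x ≤ ENNReal.ofReal (K₁ * (2:ℝ) ^ ((d + 1) / 2)) := by
      refine (big 1 le_rfl).trans (ENNReal.ofReal_le_ofReal ?_)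
      apply le_of_eq
      congr 1
      rw [w]
      norm_num
    have hwlow : (2:ℝ) ^ ((d + 1) / 2) ≤ w (d + 1) y := by
      rw [w]
      rw [show (2:ℝ) ^ ((d+1)/2) = (2:ℝ) ^ ((d+1)/2) from rfl]
      apply Real.rpow_le_rpow_of_nonpos (by nlinarith) (by nlinarith) (by linarith)
    calc (∫⁻ x in Set.Ico y 1, W d x) + ∫⁻ x in Set.Ici 1, W d x
        ≤ ENNReal.ofReal 1 + ENNReal.ofReal (K₁ * (2:ℝ) ^ ((d + 1) / 2)) :=
          add_le_add part1 part2
      _ = ENNReal.ofReal (1 + K₁ * (2:ℝ) ^ ((d + 1) / 2)) := by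
          rw [← ENNReal.ofReal_add (by norm_num) (by positivity)]
      _ ≤ ENNReal.ofReal ((K₁ + K₂) * w (d + 1) y) := by
          apply ENNReal.ofReal_le_ofReal
          have h2 : (2:ℝ) ^ (-(d + 1) / 2) * (2:ℝ) ^ ((d + 1) / 2) = 1 := by
            rw [← Real.rpow_add (by norm_num : (0:ℝ) < 2),
              show (-(d + 1) / 2 + (d + 1) / 2 : ℝ) = 0 by ring, Real.rpow_zero]
          calc (1 + K₁ * (2:ℝ) ^ ((d + 1) / 2))
              = K₂ * (2:ℝ) ^ ((d + 1) / 2) := by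
                rw [hK₂]
                linear_combination (-(1 + K₁ * (2:ℝ) ^ ((d + 1) / 2))) * h2
            _ ≤ K₂ * w (d + 1) y := mul_le_mul_of_nonneg_left hwlow hK₂pos.le
            _ ≤ (K₁ + K₂) * w (d + 1) y := by nlinarith [w_pos (d + 1) y]

end Stmt8Aux
end FrontTail
namespace Stmt8Aux

lemma tonelli_step (H V : ℝ → ℝ≥0∞) (hH : Measurable H) (hV : Measurable V)
    (hVfin : ∀ x, V x ≠ ∞) (hHfin : ∀ y, H y ≠ ∞) :
    ∫⁻ x in Set.Ioi (0:ℝ), V x * ∫⁻ y in Set.Ioc 0 x, H y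
      ≤ ∫⁻ y in Set.Ioi (0:ℝ), H y * ∫⁻ x in Set.Ici y, V x := by
  set F : ℝ × ℝ → ℝ≥0∞ :=
    Set.indicator {q : ℝ × ℝ | 0 < q.2 ∧ q.2 ≤ q.1} (fun q => V q.1 * H q.2) with hF
  have hSF : MeasurableSet {q : ℝ × ℝ | 0 < q.2 ∧ q.2 ≤ q.1} :=
    (measurableSet_lt measurable_const measurable_snd).inter
      (measurableSet_le measurable_snd measurable_fst)
  have hFmeas : Measurable F :=
    ((hV.comp measurable_fst).mul (hH.comp measurable_snd)).indicator hSF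
  have left_eq : ∀ x : ℝ, 0 < x → V x * ∫⁻ y in Set.Ioc 0 x, H y = ∫⁻ y, F (x, y) := by
    intro x hx
    have : ∀ y : ℝ, F (x, y) = (Set.Ioc 0 x).indicator (fun y => V x * H y) y := by
      intro y
      by_cases hy : y ∈ Set.Ioc 0 x
      · rw [Set.indicator_of_mem hy, hF, Set.indicator_of_mem]
        exact ⟨hy.1, hy.2⟩
      · rw [Set.indicator_of_notMem hy, hF, Set.indicator_of_notMem]
        intro hmem
        exact hy ⟨hmem.1, hmem.2⟩
    rw [lintegral_congr this, lintegral_indicator measurableSet_Ioc,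
      lintegral_const_mul' _ _ (hVfin x)]
  have right_eq : ∀ y : ℝ, 0 < y → ∫⁻ x, F (x, y) = H y * ∫⁻ x in Set.Ici y, V x := by
    intro y hy
    have : ∀ x : ℝ, F (x, y) = (Set.Ici y).indicator (fun x => H y * V x) x := by
      intro x
      by_cases hx : x ∈ Set.Ici y
      · rw [Set.indicator_of_mem hx, hF, Set.indicator_of_mem, mul_comm]
        exact ⟨hy, hx⟩
      · rw [Set.indicator_of_notMem hx, hF, Set.indicator_of_notMem]
        intro hmem
        exact hx hmem.2
    rw [lintegral_congr this, lintegral_indicator measurableSet_Ici,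
      lintegral_const_mul' _ _ (hHfin y)]
  calc ∫⁻ x in Set.Ioi (0:ℝ), V x * ∫⁻ y in Set.Ioc 0 x, H y
      = ∫⁻ x in Set.Ioi (0:ℝ), ∫⁻ y, F (x, y) :=
        setLIntegral_congr_fun measurableSet_Ioi
          (fun x hx => left_eq x hx)
    _ ≤ ∫⁻ x, ∫⁻ y, F (x, y) := setLIntegral_le_lintegral _ _
    _ = ∫⁻ y, ∫⁻ x, F (x, y) := lintegral_lintegral_swap hFmeas.aemeasurable
    _ = ∫⁻ y, Set.indicator (Set.Ioi 0) (fun y => H y * ∫⁻ x in Set.Ici y, V x) y := by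
        apply lintegral_congr
        intro y
        by_cases hy : y ∈ Set.Ioi (0:ℝ)
        · rw [Set.indicator_of_mem hy, right_eq y hy]
        · rw [Set.indicator_of_notMem hy]
          have : ∀ x : ℝ, F (x, y) = 0 := by
            intro x
            rw [hF, Set.indicator_of_notMem]
            intro hmem
            exact hy hmem.1
          simp [this]
    _ = ∫⁻ y in Set.Ioi (0:ℝ), H y * ∫⁻ x in Set.Ici y, V x :=
        lintegral_indicator measurableSet_Ioi _

end Stmt8Aux
open Stmt8Aux in
/-- For γ < 1 - 1/p, u(x) = ∫₀ˣ f satisfies ‖u ⟨x⟩^(γ-1)‖_{L^p} ≤ C ‖f ⟨x⟩^γ‖_{L^p}. -/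
theorem stmt8 (p γ : ℝ) (hp : 1 < p) (hγ : γ < 1 - 1 / p) :
    ∃ C : ℝ, 0 < C ∧ ∀ f : ℝ → ℝ, Measurable f →
      MemLp (fun x => f x * (1 + x ^ 2) ^ (γ / 2)) (ENNReal.ofReal p) volume →
      eLpNorm (fun x => (∫ y in (0 : ℝ)..x, f y) * (1 + x ^ 2) ^ ((γ - 1) / 2))
          (ENNReal.ofReal p) volume
        ≤ ENNReal.ofReal C *
          eLpNorm (fun x => f x * (1 + x ^ 2) ^ (γ / 2)) (ENNReal.ofReal p) volume := by
  have hp0 : (0:ℝ) < p := by linarith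
  set q : ℝ := Real.conjExponent p with hqdef
  have hpq : p.HolderConjugate q := Real.HolderConjugate.conjExponent hp
  have hq0 : 0 < q := hpq.symm.pos
  have hq1 : 1 / q = 1 - 1 / p := by
    have := Real.HolderConjugate.inv_add_inv_eq_one hpq
    rw [one_div, one_div]; linarith
  set a : ℝ := (1 - 1 / p - γ) / 2 with hadef
  have ha : 0 < a := by rw [hadef]; linarith
  set c : ℝ := (-γ - a) * q with hcdef
  have hc : -1 < c := by
    have h1 : γ + a < 1 / q := by rw [hq1, hadef]; linarith
    have h2 : (γ + a) * q < (1 / q) * q := mul_lt_mul_of_pos_right h1 hq0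
    rw [one_div, inv_mul_cancel₀ hq0.ne'] at h2
    rw [hcdef]; nlinarith
  set d : ℝ := -(a * p) - 1 with hddef
  have hd : d < -1 := by rw [hddef]; nlinarith
  obtain ⟨K₁, hK₁pos, hK₁⟩ := front hc
  obtain ⟨K₂, hK₂pos, hK₂⟩ := tail hd
  set Ck : ℝ := K₁ ^ (p / q) * K₂ with hCkdef
  have hCkpos : 0 < Ck := mul_pos (Real.rpow_pos_of_pos hK₁pos _) hK₂pos
  have hpm1 : p - 1 ≠ 0 := by intro h; linarith [sub_eq_zero.mp h]
  have id3 : (γ - 1) * p + (c + 1) * (p / q) = d := by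
    have hq' : q = p / (p - 1) := hqdef
    rw [hcdef, hddef, hq']
    field_simp
    ring
  have id4 : a * p + (d + 1) = 0 := by rw [hddef]; ring
  -- half-line estimate
  have key : ∀ g : ℝ → ℝ, Measurable g →
      ∫⁻ x in Set.Ioi (0:ℝ), ((‖∫ y in (0:ℝ)..x, g y‖₊ : ℝ≥0∞) * W (γ - 1) x) ^ p
        ≤ ENNReal.ofReal Ck * ∫⁻ y, ((‖g y‖₊ : ℝ≥0∞) * W γ y) ^ p := by
    intro g hg
    set G : ℝ → ℝ≥0∞ := fun y => (‖g y‖₊ : ℝ≥0∞) * W γ y with hGdef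
    have hGmeas : Measurable G :=
      (measurable_coe_nnreal_ennreal.comp hg.nnnorm).mul (measurable_W γ)
    have hGfin : ∀ y, G y ≠ ∞ := fun y => ENNReal.mul_ne_top ENNReal.coe_ne_top (W_ne_top γ y)
    set H : ℝ → ℝ≥0∞ := fun y => G y ^ p * W (a * p) y with hHdef
    have hHmeas : Measurable H :=
      (ENNReal.continuous_rpow_const.measurable.comp hGmeas).mul (measurable_W (a * p))
    have hHfin : ∀ y, H y ≠ ∞ := fun y =>
      ENNReal.mul_ne_top (ENNReal.rpow_ne_top_of_nonneg hp0.le (hGfin y)) (W_ne_top _ y)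
    have point : ∀ x ∈ Set.Ioi (0:ℝ),
        ((‖∫ y in (0:ℝ)..x, g y‖₊ : ℝ≥0∞) * W (γ - 1) x) ^ p
          ≤ ENNReal.ofReal (K₁ ^ (p / q)) * (W d x * ∫⁻ y in Set.Ioc 0 x, H y) := by
      intro x hx
      rw [Set.mem_Ioi] at hx
      set T : ℝ≥0∞ := ENNReal.ofReal (K₁ * w (c + 1) x) with hT
      set X : ℝ≥0∞ := ∫⁻ y in Set.Ioc 0 x, H y with hX
      have n1 : (‖∫ y in (0:ℝ)..x, g y‖₊ : ℝ≥0∞) ≤ ∫⁻ y in Set.Ioc 0 x, (‖g y‖₊ : ℝ≥0∞) := by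
        rw [intervalIntegral.integral_of_le hx.le]
        exact enorm_integral_le_lintegral_enorm _
      have n2 : ∫⁻ y in Set.Ioc 0 x, (‖g y‖₊ : ℝ≥0∞)
          = ∫⁻ y in Set.Ioc 0 x, ((fun y => G y * W a y) * fun y => W (-γ - a) y) y := by
        apply lintegral_congr
        intro y
        have hone : W γ y * (W a y * W (-γ - a) y) = 1 := by
          rw [W_mul, W_mul, show γ + (a + (-γ - a)) = 0 by ring, W_zero]
        calc (‖g y‖₊ : ℝ≥0∞) = (‖g y‖₊ : ℝ≥0∞) * (W γ y * (W a y * W (-γ - a) y)) := by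
              rw [hone, mul_one]
          _ = ((fun y => G y * W a y) * fun y => W (-γ - a) y) y := by
              simp only [hGdef, Pi.mul_apply]
              ring
      have n3 : ∫⁻ y in Set.Ioc 0 x, ((fun y => G y * W a y) * fun y => W (-γ - a) y) y
          ≤ (∫⁻ y in Set.Ioc 0 x, (G y * W a y) ^ p) ^ (1 / p)
            * (∫⁻ y in Set.Ioc 0 x, W (-γ - a) y ^ q) ^ (1 / q) :=
        ENNReal.lintegral_mul_le_Lp_mul_Lq _ hpq
          ((hGmeas.mul (measurable_W a)).aemeasurable) ((measurable_W _).aemeasurable)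
      have n3' : ∫⁻ y in Set.Ioc 0 x, (G y * W a y) ^ p = X := by
        rw [hX]
        apply lintegral_congr
        intro y
        simp only [hHdef]
        rw [ENNReal.mul_rpow_of_nonneg _ _ hp0.le, W_rpow _ _ hp0.le]
      have n4 : (∫⁻ y in Set.Ioc 0 x, W (-γ - a) y ^ q) ≤ T := by
        rw [hT]
        calc ∫⁻ y in Set.Ioc 0 x, W (-γ - a) y ^ q = ∫⁻ y in Set.Ioc 0 x, W c y := by
              apply lintegral_congr
              intro y
              rw [W_rpow _ _ hq0.le, ← hcdef]
          _ ≤ ENNReal.ofReal (K₁ * w (c + 1) x) := hK₁ x hx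
      have n5 : (‖∫ y in (0:ℝ)..x, g y‖₊ : ℝ≥0∞) * W (γ - 1) x
          ≤ X ^ (1 / p) * T ^ (1 / q) * W (γ - 1) x := by
        apply mul_le_mul_left
        calc (‖∫ y in (0:ℝ)..x, g y‖₊ : ℝ≥0∞)
            ≤ ∫⁻ y in Set.Ioc 0 x, (‖g y‖₊ : ℝ≥0∞) := n1
          _ = _ := n2
          _ ≤ (∫⁻ y in Set.Ioc 0 x, (G y * W a y) ^ p) ^ (1 / p)
              * (∫⁻ y in Set.Ioc 0 x, W (-γ - a) y ^ q) ^ (1 / q) := n3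
          _ ≤ X ^ (1 / p) * T ^ (1 / q) := by
              rw [n3']
              exact mul_le_mul_right (ENNReal.rpow_le_rpow n4 (by positivity)) _
      have n6 := ENNReal.rpow_le_rpow n5 hp0.le
      have hTr : T ^ (p / q) = ENNReal.ofReal (K₁ ^ (p / q)) * W ((c + 1) * (p / q)) x := by
        rw [hT, ENNReal.ofReal_rpow_of_nonneg (mul_nonneg hK₁pos.le (w_nonneg _ x))
            (div_nonneg hp0.le hq0.le),
          Real.mul_rpow hK₁pos.le (w_nonneg _ x), w_rpow,
          ENNReal.ofReal_mul (Real.rpow_nonneg hK₁pos.le _)]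
        rfl
      have n7 : (X ^ (1 / p) * T ^ (1 / q) * W (γ - 1) x) ^ p
          = ENNReal.ofReal (K₁ ^ (p / q)) * (W d x * X) := by
        have e1 : (X ^ (1 / p)) ^ p = X := by
          rw [← ENNReal.rpow_mul, one_div_mul_cancel hp0.ne', ENNReal.rpow_one]
        have e2 : (T ^ (1 / q)) ^ p = ENNReal.ofReal (K₁ ^ (p / q)) * W ((c + 1) * (p / q)) x := by
          rw [← ENNReal.rpow_mul, show 1 / q * p = p / q by ring, hTr]
        have e3 : (W (γ - 1) x) ^ p = W ((γ - 1) * p) x := W_rpow _ _ hp0.le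
        have e4 : W ((γ - 1) * p) x * W ((c + 1) * (p / q)) x = W d x := by
          rw [W_mul, id3]
        rw [ENNReal.mul_rpow_of_nonneg _ _ hp0.le, ENNReal.mul_rpow_of_nonneg _ _ hp0.le,
          e1, e2, e3, ← e4]
        ring
      exact le_trans n6 (le_of_eq n7)
    calc ∫⁻ x in Set.Ioi (0:ℝ), ((‖∫ y in (0:ℝ)..x, g y‖₊ : ℝ≥0∞) * W (γ - 1) x) ^ p
        ≤ ∫⁻ x in Set.Ioi (0:ℝ),
            ENNReal.ofReal (K₁ ^ (p / q)) * (W d x * ∫⁻ y in Set.Ioc 0 x, H y) :=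
          setLIntegral_mono' measurableSet_Ioi point
      _ = ENNReal.ofReal (K₁ ^ (p / q))
            * ∫⁻ x in Set.Ioi (0:ℝ), W d x * ∫⁻ y in Set.Ioc 0 x, H y :=
          lintegral_const_mul' _ _ ENNReal.ofReal_ne_top
      _ ≤ ENNReal.ofReal (K₁ ^ (p / q))
            * ∫⁻ y in Set.Ioi (0:ℝ), H y * ∫⁻ x in Set.Ici y, W d x :=
          mul_le_mul_right
            (tonelli_step H (W d) hHmeas (measurable_W d) (fun x => W_ne_top d x) hHfin) _
      _ ≤ ENNReal.ofReal (K₁ ^ (p / q))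
            * ∫⁻ y in Set.Ioi (0:ℝ), ENNReal.ofReal K₂ * G y ^ p := by
          apply mul_le_mul_right
          apply setLIntegral_mono' measurableSet_Ioi
          intro y hy
          rw [Set.mem_Ioi] at hy
          calc H y * ∫⁻ x in Set.Ici y, W d x
              ≤ H y * ENNReal.ofReal (K₂ * w (d + 1) y) := mul_le_mul_right (hK₂ y hy) _
            _ = ENNReal.ofReal K₂ * G y ^ p := by
                have hsplitK : ENNReal.ofReal (K₂ * w (d + 1) y)
                    = ENNReal.ofReal K₂ * W (d + 1) y := by
                  rw [ENNReal.ofReal_mul hK₂pos.le]; rfl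
                have hone : W (a * p) y * W (d + 1) y = 1 := by
                  rw [W_mul, id4, W_zero]
                simp only [hHdef]
                rw [hsplitK]
                calc G y ^ p * W (a * p) y * (ENNReal.ofReal K₂ * W (d + 1) y)
                    = ENNReal.ofReal K₂ * G y ^ p * (W (a * p) y * W (d + 1) y) := by ring
                  _ = ENNReal.ofReal K₂ * G y ^ p := by rw [hone, mul_one]
      _ = ENNReal.ofReal (K₁ ^ (p / q))
            * (ENNReal.ofReal K₂ * ∫⁻ y in Set.Ioi (0:ℝ), G y ^ p) := by
          rw [lintegral_const_mul' _ _ ENNReal.ofReal_ne_top]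
      _ ≤ ENNReal.ofReal (K₁ ^ (p / q)) * (ENNReal.ofReal K₂ * ∫⁻ y, G y ^ p) :=
          mul_le_mul_right (mul_le_mul_right (setLIntegral_le_lintegral _ _) _) _
      _ = ENNReal.ofReal Ck * ∫⁻ y, ((‖g y‖₊ : ℝ≥0∞) * W γ y) ^ p := by
          rw [← mul_assoc, ← ENNReal.ofReal_mul (by positivity), ← hCkdef]
  -- main argument
  refine ⟨(2 * Ck) ^ (1 / p), Real.rpow_pos_of_pos (by linarith) _, ?_⟩
  intro f hf _hmem
  set u : ℝ → ℝ := fun x => ∫ y in (0:ℝ)..x, f y with hu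
  set Φ : ℝ → ℝ≥0∞ := fun x => ((‖u x‖₊ : ℝ≥0∞) * W (γ - 1) x) ^ p with hΦ
  set G : ℝ → ℝ≥0∞ := fun y => (‖f y‖₊ : ℝ≥0∞) * W γ y with hG
  set I : ℝ≥0∞ := ∫⁻ y, G y ^ p with hI
  have hpne0 : (ENNReal.ofReal p) ≠ 0 := by
    simp only [ne_eq, ENNReal.ofReal_eq_zero, not_le]; linarith
  have hptop : (ENNReal.ofReal p) ≠ ∞ := ENNReal.ofReal_ne_top
  have htoReal : (ENNReal.ofReal p).toReal = p := ENNReal.toReal_ofReal hp0.le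
  have eLhs : eLpNorm (fun x => (∫ y in (0:ℝ)..x, f y) * (1 + x ^ 2) ^ ((γ - 1) / 2))
      (ENNReal.ofReal p) volume = (∫⁻ x, Φ x) ^ (1 / p) := by
    rw [eLpNorm_eq_lintegral_rpow_enorm_toReal hpne0 hptop, htoReal]
    congr 1
    apply lintegral_congr
    intro x
    simp only [hΦ, hu]
    congr 1
    rw [enorm_eq_nnnorm, nnnorm_mul, ENNReal.coe_mul]
    congr 1
    exact Real.enorm_eq_ofReal (w_nonneg (γ - 1) x)
  have eRhs : eLpNorm (fun x => f x * (1 + x ^ 2) ^ (γ / 2)) (ENNReal.ofReal p) volume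
      = I ^ (1 / p) := by
    rw [eLpNorm_eq_lintegral_rpow_enorm_toReal hpne0 hptop, htoReal, hI]
    congr 1
    apply lintegral_congr
    intro x
    simp only [hG]
    congr 1
    rw [enorm_eq_nnnorm, nnnorm_mul, ENNReal.coe_mul]
    congr 1
    exact Real.enorm_eq_ofReal (w_nonneg γ x)
  have pos_half : ∫⁻ x in Set.Ioi (0:ℝ), Φ x ≤ ENNReal.ofReal Ck * I := by
    have := key f hf
    simpa only [hΦ, hu, hG, hI] using this
  have neg_half : ∫⁻ x in Set.Iio (0:ℝ), Φ x ≤ ENNReal.ofReal Ck * I := by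
    have hmp : MeasurePreserving (fun x : ℝ => -x) volume volume :=
      Measure.measurePreserving_neg _
    have hemb : MeasurableEmbedding (fun x : ℝ => -x) :=
      (Homeomorph.neg ℝ).measurableEmbedding
    have hpre : (fun x : ℝ => -x) ⁻¹' (Set.Iio 0) = Set.Ioi 0 := by
      ext x
      simp
    have swap1 : ∫⁻ x in Set.Iio (0:ℝ), Φ x = ∫⁻ x in Set.Ioi (0:ℝ), Φ (-x) := by
      rw [← hmp.setLIntegral_comp_preimage_emb hemb Φ (Set.Iio 0), hpre]
    have flip : ∀ x : ℝ,
        Φ (-x) = ((‖∫ y in (0:ℝ)..x, f (-y)‖₊ : ℝ≥0∞) * W (γ - 1) x) ^ p := by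
      intro x
      have h1 : (∫ y in (0:ℝ)..x, f (-y)) = ∫ y in (-x)..(0:ℝ), f y := by
        simpa using intervalIntegral.integral_comp_neg (a := 0) (b := x) (fun y => f y)
      have h2 : u (-x) = -∫ y in (-x)..(0:ℝ), f y := by
        simp only [hu]
        exact intervalIntegral.integral_symm _ _
      simp only [hΦ]
      rw [h2, ← h1, nnnorm_neg, W_neg_arg]
    have swap2 : ∫⁻ y, ((‖f (-y)‖₊ : ℝ≥0∞) * W γ y) ^ p = I := by
      rw [hI]
      have hcong : ∀ y : ℝ, ((‖f (-y)‖₊ : ℝ≥0∞) * W γ y) ^ p = (fun z => G z ^ p) (-y) := by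
        intro y
        simp only [hG]
        rw [W_neg_arg]
      rw [lintegral_congr hcong]
      exact hmp.lintegral_comp_emb hemb (fun z => G z ^ p)
    calc ∫⁻ x in Set.Iio (0:ℝ), Φ x = ∫⁻ x in Set.Ioi (0:ℝ), Φ (-x) := swap1
      _ = ∫⁻ x in Set.Ioi (0:ℝ), ((‖∫ y in (0:ℝ)..x, f (-y)‖₊ : ℝ≥0∞) * W (γ - 1) x) ^ p :=
          setLIntegral_congr_fun measurableSet_Ioi (fun x _ => flip x)
      _ ≤ ENNReal.ofReal Ck * ∫⁻ y, ((‖f (-y)‖₊ : ℝ≥0∞) * W γ y) ^ p :=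
          key (fun y => f (-y)) (hf.comp measurable_neg)
      _ = ENNReal.ofReal Ck * I := by rw [swap2]
  have total : ∫⁻ x, Φ x ≤ ENNReal.ofReal (2 * Ck) * I := by
    have h0 : ({(0:ℝ)}ᶜ : Set ℝ) =ᵐ[volume] Set.univ := by
      rw [MeasureTheory.ae_eq_univ, compl_compl]
      exact measure_singleton 0
    have hsplit : ∫⁻ x, Φ x = (∫⁻ x in Set.Iio (0:ℝ), Φ x) + ∫⁻ x in Set.Ioi (0:ℝ), Φ x := by
      calc ∫⁻ x, Φ x = ∫⁻ x in Set.univ, Φ x := (setLIntegral_univ Φ).symm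
        _ = ∫⁻ x in ({(0:ℝ)}ᶜ : Set ℝ), Φ x := (setLIntegral_congr h0).symm
        _ = ∫⁻ x in Set.Iio 0 ∪ Set.Ioi 0, Φ x := by rw [Set.Iio_union_Ioi]
        _ = _ := lintegral_union measurableSet_Ioi
              (Set.disjoint_left.mpr fun x hx hx' => absurd (Set.mem_Ioi.1 hx')
                (not_lt.mpr (le_of_lt (Set.mem_Iio.1 hx))))
    rw [hsplit]
    calc (∫⁻ x in Set.Iio (0:ℝ), Φ x) + ∫⁻ x in Set.Ioi (0:ℝ), Φ x
        ≤ ENNReal.ofReal Ck * I + ENNReal.ofReal Ck * I := add_le_add neg_half pos_half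
      _ = ENNReal.ofReal (2 * Ck) * I := by
          rw [← two_mul, ← mul_assoc, show (2:ℝ≥0∞) = ENNReal.ofReal 2 by norm_num,
            ← ENNReal.ofReal_mul (by norm_num)]
  rw [eLhs, eRhs]
  calc (∫⁻ x, Φ x) ^ (1 / p)
      ≤ (ENNReal.ofReal (2 * Ck) * I) ^ (1 / p) := ENNReal.rpow_le_rpow total (by positivity)
    _ = ENNReal.ofReal ((2 * Ck) ^ (1 / p)) * I ^ (1 / p) := by
        rw [ENNReal.mul_rpow_of_nonneg _ _ (by positivity),
          ENNReal.ofReal_rpow_of_nonneg (by linarith) (by positivity)]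
end

section
/- Let σ > 2 and f ∈ M^{1,2}_{σ+1}(ℝ), i.e. f·⟨x⟩^{σ+1} ∈ L² and f'·⟨x⟩^{σ+2} ∈ L². Then f² ∈ L²_{σ+4}, with ‖f²·⟨x⟩^{σ+4}‖_{L²} ≤ C‖f‖²_{M^{1,2}_{σ+1}}. -/
open MeasureTheory Filter Topology

private lemma stmt14_cs_L2 (u v : ℝ → ℝ) (hu : MemLp u 2 volume) (hv : MemLp v 2 volume) :
    ∫ x, u x * v x ≤ (eLpNorm u 2 volume).toReal * (eLpNorm v 2 volume).toReal := by
  have h1 : ∫ x, u x * v x = (inner ℝ (hu.toLp u) (hv.toLp v) : ℝ) := by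
    rw [MeasureTheory.L2.inner_def]
    apply integral_congr_ae
    filter_upwards [hu.coeFn_toLp, hv.coeFn_toLp] with x hx hy
    simp [hx, hy, mul_comm]
  rw [h1, ← Lp.norm_toLp u hu, ← Lp.norm_toLp v hv]
  exact real_inner_le_norm _ _

private lemma stmt14_agmon (h h' : ℝ → ℝ) (hd : ∀ x, HasDerivAt h (h' x) x)
    (hm : MemLp h 2 volume) (hm' : MemLp h' 2 volume) (x : ℝ) :
    (h x) ^ 2 ≤ 2 * ((eLpNorm h 2 volume).toReal * (eLpNorm h' 2 volume).toReal) := by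
  set φ : ℝ → ℝ := fun y => h y ^ 2 with hφ
  set ψ : ℝ → ℝ := fun y => 2 * (h y * h' y) with hψ
  have φd : ∀ y, HasDerivAt φ (ψ y) y := by
    intro y
    have := ((hd y).mul (hd y))
    have e : φ = h * h := by ext z; simp [hφ, sq]
    rw [e]; exact this.congr_deriv (by simp only [hψ]; ring)
  have hψint : Integrable ψ volume := by
    have h2 : MemLp (h • h') 1 volume := by
      haveI : ENNReal.HolderTriple 2 2 1 := ⟨by rw [ENNReal.inv_two_add_inv_two, inv_one]⟩
      exact hm'.smul hm
    have := (memLp_one_iff_integrable.mp h2).const_mul 2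
    simpa [hψ, Pi.smul_apply, smul_eq_mul] using this
  have φint : Integrable φ volume := hm.integrable_sq
  have tends : Tendsto φ atBot (𝓝 (limUnder atBot φ)) :=
    tendsto_limUnder_of_hasDerivAt_of_integrableOn_Iic (a := x) (fun y _ => φd y)
      hψint.integrableOn
  set m := limUnder atBot φ with hm_def
  have hm0 : 0 ≤ m := ge_of_tendsto tends (Eventually.of_forall fun y => sq_nonneg _)
  have hmzero : m = 0 := by
    by_contra hne
    have hpos : 0 < m := lt_of_le_of_ne hm0 (Ne.symm hne)
    have hev : ∀ᶠ y in atBot, m / 2 < φ y :=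
      tends.eventually (eventually_gt_nhds (half_lt_self hpos))
    obtain ⟨b, hb⟩ := eventually_atBot.mp hev
    have hsub : Set.Iic b ⊆ {y : ℝ | m / 2 ≤ φ y} := fun y hy => (hb y hy).le
    have h1 : volume {y : ℝ | m / 2 ≤ φ y} = ⊤ := by
      refine top_le_iff.mp ?_
      calc (⊤ : ENNReal) = volume (Set.Iic b) := (Real.volume_Iic).symm
        _ ≤ _ := measure_mono hsub
    exact absurd h1 (φint.measure_ge_lt_top (half_pos hpos)).ne
  have ftc : ∫ y in Set.Iic x, ψ y = φ x - m :=
    integral_Iic_of_hasDerivAt_of_tendsto' (fun y _ => φd y) hψint.integrableOn tends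
  rw [hmzero, sub_zero] at ftc
  have habsint : Integrable (fun y => 2 * (‖h y‖ * ‖h' y‖)) volume := by
    have := hψint.abs
    simpa [hψ, abs_mul, Real.norm_eq_abs] using this
  calc φ x = ∫ y in Set.Iic x, ψ y := ftc.symm
    _ ≤ ∫ y in Set.Iic x, 2 * (‖h y‖ * ‖h' y‖) := by
        refine integral_mono hψint.integrableOn habsint.integrableOn fun y => ?_
        have : ψ y ≤ |ψ y| := le_abs_self _
        simpa [hψ, abs_mul, Real.norm_eq_abs] using this
    _ ≤ ∫ y, 2 * (‖h y‖ * ‖h' y‖) := by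
        refine setIntegral_le_integral habsint (Eventually.of_forall fun y => ?_)
        positivity
    _ = 2 * ∫ y, ‖h y‖ * ‖h' y‖ := MeasureTheory.integral_const_mul 2 _
    _ ≤ 2 * ((eLpNorm h 2 volume).toReal * (eLpNorm h' 2 volume).toReal) := by
        have := stmt14_cs_L2 (fun y => ‖h y‖) (fun y => ‖h' y‖) hm.norm hm'.norm
        rw [eLpNorm_norm, eLpNorm_norm] at this
        linarith

/-- For σ > 2 and f ∈ M^{1,2}_{σ+1}, f² ∈ L²_{σ+4} with a quadratic bound. -/
theorem stmt14 (σ : ℝ) (hσ : 2 < σ) :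
    ∃ C : ℝ, 0 < C ∧ ∀ f : ℝ → ℝ, Differentiable ℝ f →
      MemLp (fun x => f x * (1 + x ^ 2) ^ ((σ + 1) / 2)) 2 volume →
      MemLp (fun x => deriv f x * (1 + x ^ 2) ^ ((σ + 2) / 2)) 2 volume →
      MemLp (fun x => (f x) ^ 2 * (1 + x ^ 2) ^ ((σ + 4) / 2)) 2 volume ∧
      (eLpNorm (fun x => (f x) ^ 2 * (1 + x ^ 2) ^ ((σ + 4) / 2)) 2 volume).toReal ≤
        C * ((eLpNorm (fun x => f x * (1 + x ^ 2) ^ ((σ + 1) / 2)) 2 volume).toReal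
           + (eLpNorm (fun x => deriv f x * (1 + x ^ 2) ^ ((σ + 2) / 2)) 2 volume).toReal) ^ 2 := by
  have hCpos : (0:ℝ) < Real.sqrt (2 * (σ + 1)) := Real.sqrt_pos.mpr (by linarith)
  refine ⟨Real.sqrt (2 * (σ + 1)), hCpos, ?_⟩
  intro f hdf hg1 hg2
  -- basic facts about the weight
  have hbase : ∀ x : ℝ, (0:ℝ) < 1 + x ^ 2 := fun x => by positivity
  have hbase1 : ∀ x : ℝ, (1:ℝ) ≤ 1 + x ^ 2 := fun x => by nlinarith [sq_nonneg x]
  have wpos : ∀ (r : ℝ) (x : ℝ), (0:ℝ) < (1 + x ^ 2) ^ r := fun r x =>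
    Real.rpow_pos_of_pos (hbase x) r
  have wmono : ∀ {r s : ℝ} (x : ℝ), r ≤ s → ((1 + x ^ 2 : ℝ) ^ r ≤ (1 + x ^ 2) ^ s) :=
    fun {r s} x hrs => Real.rpow_le_rpow_of_exponent_le (hbase1 x) hrs
  have wadd : ∀ (r s : ℝ) (x : ℝ),
      ((1 + x ^ 2 : ℝ) ^ (r + s)) = (1 + x ^ 2) ^ r * (1 + x ^ 2) ^ s := fun r s x =>
    Real.rpow_add (hbase x) r s
  have wcont : ∀ r : ℝ, Continuous (fun x : ℝ => (1 + x ^ 2 : ℝ) ^ r) := fun r =>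
    (continuous_const.add (continuous_pow 2)).rpow_const fun x => Or.inl (hbase x).ne'
  have habsx : ∀ x : ℝ, |x| ≤ (1 + x ^ 2 : ℝ) ^ (1/2 : ℝ) := by
    intro x
    rw [← Real.sqrt_eq_rpow, ← Real.sqrt_sq_eq_abs]
    exact Real.sqrt_le_sqrt (by nlinarith)
  set g1 : ℝ → ℝ := fun x => f x * (1 + x ^ 2) ^ ((σ + 1) / 2) with hg1def
  set g2 : ℝ → ℝ := fun x => deriv f x * (1 + x ^ 2) ^ ((σ + 2) / 2) with hg2def
  set A := (eLpNorm g1 2 volume).toReal with hAdef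
  set B := (eLpNorm g2 2 volume).toReal with hBdef
  have hA0 : 0 ≤ A := ENNReal.toReal_nonneg
  have hB0 : 0 ≤ B := ENNReal.toReal_nonneg
  -- the derivative of g1
  set D : ℝ → ℝ := fun x => deriv f x * (1 + x ^ 2) ^ ((σ + 1) / 2)
      + f x * ((σ + 1) * x * (1 + x ^ 2) ^ ((σ + 1) / 2 - 1)) with hDdef
  have hD : ∀ x, HasDerivAt g1 (D x) x := by
    intro x
    have h1 : HasDerivAt (fun y : ℝ => 1 + y ^ 2) ((2:ℕ) * x ^ (2 - 1)) x :=
      (hasDerivAt_pow 2 x).const_add 1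
    have h2 := h1.rpow_const (p := (σ + 1) / 2) (Or.inl (hbase x).ne')
    have h3 := (hdf x).hasDerivAt.mul h2
    refine h3.congr_deriv ?_
    rw [hDdef]
    push_cast
    ring
  have hDmeas : AEStronglyMeasurable D volume := by
    refine Measurable.aestronglyMeasurable ?_
    exact ((measurable_deriv f).mul (wcont _).measurable).add
      ((hdf.continuous.measurable).mul
        ((measurable_const.mul measurable_id').mul (wcont _).measurable))
  -- the dominating function
  set u : ℝ → ℝ := fun x => ‖g2 x‖ + (σ + 1) * ‖g1 x‖ with hudef
  have hu2 : MemLp u 2 volume := hg2.norm.add (hg1.norm.const_mul (σ + 1))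
  have hDle : ∀ x, ‖D x‖ ≤ u x := by
    intro x
    have t1 : ‖deriv f x * (1 + x ^ 2) ^ ((σ + 1) / 2)‖ ≤ ‖g2 x‖ := by
      rw [hg2def]
      simp only [Real.norm_eq_abs, abs_mul, abs_of_pos (wpos _ x)]
      exact mul_le_mul_of_nonneg_left (wmono x (by linarith)) (abs_nonneg _)
    have t2 : ‖f x * ((σ + 1) * x * (1 + x ^ 2) ^ ((σ + 1) / 2 - 1))‖ ≤ (σ + 1) * ‖g1 x‖ := by
      rw [hg1def]
      simp only [Real.norm_eq_abs, abs_mul, abs_of_pos (wpos _ x)]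
      have hs1 : |σ + 1| = σ + 1 := abs_of_pos (by linarith)
      rw [hs1]
      have key : |x| * (1 + x ^ 2) ^ ((σ + 1) / 2 - 1) ≤ (1 + x ^ 2) ^ ((σ + 1) / 2) := by
        calc |x| * (1 + x ^ 2) ^ ((σ + 1) / 2 - 1)
            ≤ (1 + x ^ 2) ^ (1/2 : ℝ) * (1 + x ^ 2) ^ ((σ + 1) / 2 - 1) :=
              mul_le_mul_of_nonneg_right (habsx x) (wpos _ x).le
          _ = (1 + x ^ 2) ^ ((1/2 : ℝ) + ((σ + 1) / 2 - 1)) := (wadd _ _ x).symm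
          _ ≤ (1 + x ^ 2) ^ ((σ + 1) / 2) := wmono x (by linarith)
      calc |f x| * ((σ + 1) * |x| * (1 + x ^ 2) ^ ((σ + 1) / 2 - 1))
          = (σ + 1) * (|f x| * (|x| * (1 + x ^ 2) ^ ((σ + 1) / 2 - 1))) := by ring
        _ ≤ (σ + 1) * (|f x| * (1 + x ^ 2) ^ ((σ + 1) / 2)) := by
            refine mul_le_mul_of_nonneg_left ?_ (by linarith)
            exact mul_le_mul_of_nonneg_left key (abs_nonneg _)
    calc ‖D x‖ ≤ ‖deriv f x * (1 + x ^ 2) ^ ((σ + 1) / 2)‖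
          + ‖f x * ((σ + 1) * x * (1 + x ^ 2) ^ ((σ + 1) / 2 - 1))‖ := norm_add_le _ _
      _ ≤ u x := add_le_add t1 t2
  have hDmem : MemLp D 2 volume :=
    hu2.of_le hDmeas (Eventually.of_forall fun x => (hDle x).trans (le_abs_self _))
  set Dn := (eLpNorm D 2 volume).toReal with hDndef
  have hDn0 : 0 ≤ Dn := ENNReal.toReal_nonneg
  have hDnle : Dn ≤ B + (σ + 1) * A := by
    have e1 : eLpNorm D 2 volume ≤ eLpNorm u 2 volume :=
      eLpNorm_mono fun x => (hDle x).trans (le_abs_self _)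
    have e2 : eLpNorm u 2 volume
        ≤ eLpNorm (fun x => ‖g2 x‖) 2 volume + eLpNorm (fun x => (σ + 1) * ‖g1 x‖) 2 volume := by
      have hsplit : u = (fun x => ‖g2 x‖) + fun x => (σ + 1) * ‖g1 x‖ := rfl
      rw [hsplit]
      exact eLpNorm_add_le hg2.norm.aestronglyMeasurable
        (hg1.norm.const_mul (σ + 1)).aestronglyMeasurable one_le_two
    have e3 : eLpNorm (fun x => ‖g2 x‖) 2 volume = eLpNorm g2 2 volume := eLpNorm_norm _
    have e4 : eLpNorm (fun x => (σ + 1) * ‖g1 x‖) 2 volume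
        = (‖σ + 1‖₊ : ENNReal) * eLpNorm g1 2 volume := by
      rw [← eLpNorm_norm g1]
      exact eLpNorm_const_smul (σ + 1) (fun x => ‖g1 x‖) 2 volume
    have efin : eLpNorm g2 2 volume + (‖σ + 1‖₊ : ENNReal) * eLpNorm g1 2 volume ≠ ⊤ :=
      ENNReal.add_ne_top.mpr ⟨hg2.eLpNorm_ne_top,
        ENNReal.mul_ne_top ENNReal.coe_ne_top hg1.eLpNorm_ne_top⟩
    have := ENNReal.toReal_mono efin (e1.trans (e2.trans_eq (by rw [e3, e4])))
    rw [ENNReal.toReal_add hg2.eLpNorm_ne_top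
        (ENNReal.mul_ne_top ENNReal.coe_ne_top hg1.eLpNorm_ne_top),
      ENNReal.toReal_mul, ENNReal.coe_toReal, coe_nnnorm, Real.norm_eq_abs,
      abs_of_pos (by linarith : (0:ℝ) < σ + 1)] at this
    exact this
  -- Agmon inequality
  have key : ∀ x, (g1 x) ^ 2 ≤ 2 * (A * Dn) := fun x =>
    stmt14_agmon g1 D hD hg1 hDmem x
  set M := Real.sqrt (2 * (A * Dn)) with hMdef
  have hM0 : 0 ≤ M := Real.sqrt_nonneg _
  have hMsq : M ^ 2 = 2 * (A * Dn) := Real.sq_sqrt (by positivity)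
  have habsg1 : ∀ x, |g1 x| ≤ M := by
    intro x
    rw [← Real.sqrt_sq_eq_abs]
    exact Real.sqrt_le_sqrt (key x)
  -- pointwise bound on the target
  set T : ℝ → ℝ := fun x => (f x) ^ 2 * (1 + x ^ 2) ^ ((σ + 4) / 2) with hTdef
  have hTle : ∀ x, ‖T x‖ ≤ ‖(M • g1) x‖ := by
    intro x
    have split : (f x) ^ 2 * (1 + x ^ 2 : ℝ) ^ ((σ + 4) / 2)
        = (|f x| * (1 + x ^ 2) ^ (3/2 : ℝ)) * |g1 x| := by
      have e : ((σ + 4) / 2 : ℝ) = (3/2 : ℝ) + (σ + 1) / 2 := by ring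
      rw [hg1def]
      simp only [abs_mul, abs_of_pos (wpos ((σ+1)/2) x)]
      rw [e, wadd]
      have hf2 : f x ^ 2 = |f x| * |f x| := by rw [pow_two, ← abs_mul_abs_self]
      rw [hf2]; ring
    have hb1 : |f x| * (1 + x ^ 2 : ℝ) ^ (3/2 : ℝ) ≤ |g1 x| := by
      rw [hg1def]
      calc |f x| * (1 + x ^ 2 : ℝ) ^ (3/2 : ℝ)
          ≤ |f x| * (1 + x ^ 2) ^ ((σ + 1) / 2) :=
            mul_le_mul_of_nonneg_left (wmono x (by linarith)) (abs_nonneg _)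
        _ = |f x * (1 + x ^ 2) ^ ((σ + 1) / 2)| := by
            rw [abs_mul, abs_of_pos (wpos _ x)]
    have hT0 : 0 ≤ T x := by
      rw [hTdef]
      positivity
    calc ‖T x‖ = T x := by rw [Real.norm_eq_abs, abs_of_nonneg hT0]
      _ = (|f x| * (1 + x ^ 2) ^ (3/2 : ℝ)) * |g1 x| := by rw [hTdef]; exact split
      _ ≤ |g1 x| * |g1 x| := mul_le_mul_of_nonneg_right hb1 (abs_nonneg _)
      _ ≤ M * |g1 x| := mul_le_mul_of_nonneg_right (habsg1 x) (abs_nonneg _)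
      _ = ‖(M • g1) x‖ := by
          simp [Real.norm_eq_abs, abs_mul, abs_of_nonneg hM0]
  have hTmeas : AEStronglyMeasurable T volume :=
    (((hdf.continuous.pow 2).mul (wcont _)).aestronglyMeasurable)
  have hTmem : MemLp T 2 volume :=
    (hg1.const_smul M).of_le hTmeas (Eventually.of_forall hTle)
  refine ⟨hTmem, ?_⟩
  -- quantitative bound
  have hTnorm : (eLpNorm T 2 volume).toReal ≤ M * A := by
    have e1 : eLpNorm T 2 volume ≤ eLpNorm (M • g1) 2 volume := eLpNorm_mono hTle
    have e2 : eLpNorm (M • g1) 2 volume = (‖M‖₊ : ENNReal) * eLpNorm g1 2 volume :=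
      eLpNorm_const_smul M g1 2 volume
    have efin : (‖M‖₊ : ENNReal) * eLpNorm g1 2 volume ≠ ⊤ :=
      ENNReal.mul_ne_top ENNReal.coe_ne_top hg1.eLpNorm_ne_top
    have := ENNReal.toReal_mono efin (e1.trans_eq e2)
    rw [ENNReal.toReal_mul, ENNReal.coe_toReal, coe_nnnorm, Real.norm_eq_abs,
      abs_of_nonneg hM0] at this
    exact this
  have hMle : M ≤ Real.sqrt (2 * (σ + 1)) * (A + B) := by
    have h1 : 2 * (A * Dn) ≤ 2 * (σ + 1) * (A + B) ^ 2 := by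
      have h2 : A * Dn ≤ A * (B + (σ + 1) * A) :=
        mul_le_mul_of_nonneg_left hDnle hA0
      have h3 : A * (B + (σ + 1) * A) ≤ (σ + 1) * (A + B) ^ 2 := by
        nlinarith [mul_nonneg hA0 hB0, sq_nonneg B,
          mul_nonneg (mul_nonneg hA0 hB0) (by linarith : (0:ℝ) ≤ σ),
          mul_nonneg (sq_nonneg B) (by linarith : (0:ℝ) ≤ σ)]
      linarith
    calc M ≤ Real.sqrt (2 * (σ + 1) * (A + B) ^ 2) := Real.sqrt_le_sqrt h1
      _ = Real.sqrt (2 * (σ + 1)) * Real.sqrt ((A + B) ^ 2) :=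
          Real.sqrt_mul (by linarith) _
      _ = Real.sqrt (2 * (σ + 1)) * (A + B) := by
          rw [Real.sqrt_sq (by linarith)]
  calc (eLpNorm T 2 volume).toReal ≤ M * A := hTnorm
    _ ≤ (Real.sqrt (2 * (σ + 1)) * (A + B)) * (A + B) :=
        mul_le_mul hMle (by linarith) hA0 (by positivity)
    _ = Real.sqrt (2 * (σ + 1)) * (A + B) ^ 2 := by ring
end
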